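/- arXiv:1611.06538 — 7 statements merged into one kernel-verified Lean document; each statement's English description precedes it below -/
import Mathlib

section
/- For fixed integer t_r ≥ 0, the delayed-CSIT degrees of freedom is strictly increasing in the transmit-side cache size: for every integer t_t ≥ 1, d_D(t_t+1, t_r) > d_D(t_t, t_r). -/
/-- Delayed-CSIT degrees of freedom: `d_D(t_t, t_r) = t_t / (∑_{j=t_r+1}^{t_r+t_t} 1/j)`. -/
noncomputable def dD (tt tr : ℕ) : ℝ :=
  (tt : ℝ) / ∑ j ∈ Finset.Icc (tr + 1) (tr + tt), (1 : ℝ) / (j : ℝ)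

/-- For fixed `t_r ≥ 0`, `d_D` is strictly increasing in `t_t`:
`d_D(t_t+1, t_r) > d_D(t_t, t_r)` for every `t_t ≥ 1`. -/
theorem stmt_3 (tt tr : ℕ) (htt : 1 ≤ tt) :
    dD (tt + 1) tr > dD tt tr := by
  unfold dD
  have hn : (0:ℝ) < (tr:ℝ) + tt := by
    have : (1:ℝ) ≤ (tt:ℝ) := by exact_mod_cast htt
    linarith [Nat.cast_nonneg (α := ℝ) tr]
  set S := ∑ j ∈ Finset.Icc (tr + 1) (tr + tt), (1:ℝ)/(j:ℝ) with hS
  have hSlb : (tt : ℝ)/((tr:ℝ) + tt) ≤ S := by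
    have hconst : (tt:ℝ)/((tr:ℝ)+tt)
        = ∑ _j ∈ Finset.Icc (tr+1) (tr+tt), (1:ℝ)/((tr:ℝ)+tt) := by
      rw [Finset.sum_const, Nat.card_Icc]
      have : tr + tt + 1 - (tr + 1) = tt := by omega
      rw [this]
      rw [nsmul_eq_mul]
      field_simp
    rw [hS, hconst]
    apply Finset.sum_le_sum
    intro j hj
    obtain ⟨h1, h2⟩ := Finset.mem_Icc.mp hj
    have hj0 : (0:ℝ) < (j:ℝ) := by
      have : 1 ≤ j := by omega
      exact_mod_cast Nat.lt_of_lt_of_le Nat.zero_lt_one this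
    apply one_div_le_one_div_of_le hj0
    have : (j:ℝ) ≤ ((tr + tt : ℕ) : ℝ) := by exact_mod_cast h2
    simpa using this
  have hSpos : 0 < S := lt_of_lt_of_le (by positivity) hSlb
  have hsplit : ∑ j ∈ Finset.Icc (tr + 1) (tr + (tt + 1)), (1:ℝ)/(j:ℝ)
      = S + 1/(((tr + tt : ℕ) : ℝ) + 1) := by
    have h : tr + (tt + 1) = (tr + tt) + 1 := by ring
    rw [h, Finset.sum_Icc_succ_top (by omega), hS]
    push_cast
    ring
  rw [hsplit]
  have hc : (0:ℝ) < 1/(((tr + tt : ℕ) : ℝ) + 1) := by positivity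
  rw [gt_iff_lt, div_lt_div_iff₀ hSpos (by linarith)]
  have hkey : (tt:ℝ) * (1/(((tr + tt : ℕ) : ℝ) + 1)) < S := by
    have h1 : (tt:ℝ) * (1/(((tr + tt : ℕ) : ℝ) + 1)) < (tt:ℝ)/((tr:ℝ)+tt) := by
      rw [mul_one_div]
      apply div_lt_div_of_pos_left
      · exact_mod_cast Nat.lt_of_lt_of_le Nat.zero_lt_one htt
      · exact hn
      · push_cast; linarith
    linarith
  push_cast at hkey ⊢
  nlinarith [hkey, hSpos]
end

section
/- Under delayed CSIT, a unit of cache at the receive side is strictly more valuable than a unit at the transmit side: for all integers t_t ≥ 1 and t_r ≥ 0, d_D(t_t, t_r+1) > d_D(t_t+1, t_r). -/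
/-- Under delayed CSIT a unit of receive-side cache beats a unit of transmit-side cache:
`d_D(t_t, t_r+1) > d_D(t_t+1, t_r)` for all `t_t ≥ 1`, `t_r ≥ 0`. -/
theorem stmt_5 (tt tr : ℕ) (htt : 1 ≤ tt) :
    dD tt (tr + 1) > dD (tt + 1) tr := by
  unfold dD
  set S1 : ℝ := ∑ j ∈ Finset.Icc (tr + 1 + 1) (tr + 1 + tt), (1 : ℝ) / (j : ℝ) with hS1
  have hne : (Finset.Icc (tr + 1 + 1) (tr + 1 + tt)).Nonempty := by
    rw [Finset.nonempty_Icc]; omega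
  have hpos1 : 0 < S1 := by
    apply Finset.sum_pos _ hne
    intro i hi
    simp only [Finset.mem_Icc] at hi
    have : 0 < i := by omega
    have : (0:ℝ) < i := by exact_mod_cast this
    positivity
  -- S2 = S1 + 1/(tr+1)
  have hsplit : ∑ j ∈ Finset.Icc (tr + 1) (tr + (tt + 1)), (1 : ℝ) / (j : ℝ)
      = 1 / ((tr : ℝ) + 1) + S1 := by
    have h1 : tr + 1 ≤ tr + (tt + 1) := by omega
    rw [Finset.Icc_eq_cons_Ioc h1, Finset.sum_cons]
    have : Finset.Ioc (tr + 1) (tr + (tt + 1)) = Finset.Icc (tr + 1 + 1) (tr + 1 + tt) := by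
      rw [← Finset.Icc_add_one_left_eq_Ioc]; congr 1; omega
    rw [this]
    congr 1
    push_cast
    ring
  rw [hsplit]
  have hS2pos : 0 < 1 / ((tr : ℝ) + 1) + S1 := by positivity
  rw [gt_iff_lt, div_lt_div_iff₀ hS2pos hpos1]
  have hkey : S1 < (tt : ℝ) * (1 / ((tr : ℝ) + 1)) := by
    have hlt : S1 < ∑ _j ∈ Finset.Icc (tr + 1 + 1) (tr + 1 + tt), 1 / ((tr : ℝ) + 1) := by
      apply Finset.sum_lt_sum_of_nonempty hne
      intro i hi
      simp only [Finset.mem_Icc] at hi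
      apply div_lt_div_of_pos_left one_pos (by positivity)
      have : (tr : ℝ) + 2 ≤ (i : ℝ) := by exact_mod_cast hi.1
      linarith
    rw [Finset.sum_const, nsmul_eq_mul, Nat.card_Icc] at hlt
    have hc : ((tr + 1 + tt + 1 - (tr + 1 + 1) : ℕ) : ℝ) = (tt : ℝ) := by
      congr 1; omega
    rw [hc] at hlt
    exact hlt
  have httr : (1 : ℝ) ≤ (tt : ℝ) := by exact_mod_cast htt
  push_cast
  nlinarith [hkey, hpos1]
end

section
/- For a fixed aggregate normalized cache size s ≥ 2, the delayed-CSIT degrees of freedom is strictly increasing in the fraction of cache placed at the receivers: for all integers k, k' with 0 ≤ k < k' ≤ s − 1, one has (s − k) / (∑_{j=k+1}^{s} 1/j) < (s − k') / (∑_{j=k'+1}^{s} 1/j). (Here k and k' play the role of the receive-side cache size t_r, and s − k, s − k' play the role of the transmit-side cache size t_t, so that the total cache s = t_t + t_r is held fixed.) -/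
private lemma Spos (s k : ℕ) (h : k + 1 ≤ s) :
    0 < ∑ j ∈ Finset.Icc (k + 1) s, (1 : ℝ) / (j : ℝ) := by
  apply Finset.sum_pos
  · intro i hi
    simp only [Finset.mem_Icc] at hi
    have : 0 < (i : ℝ) := by
      have : 0 < i := by omega
      exact_mod_cast this
    positivity
  · exact ⟨k + 1, by simp [Finset.mem_Icc, h]⟩

private lemma Slt (s k : ℕ) (h : k + 2 ≤ s) :
    ∑ j ∈ Finset.Icc (k + 1) s, (1 : ℝ) / (j : ℝ)
      < ((s : ℝ) - k) / ((k : ℝ) + 1) := by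
  have hcard : (Finset.Icc (k + 1) s).card = s - k := by
    rw [Nat.card_Icc]; omega
  have key : ∑ j ∈ Finset.Icc (k + 1) s, (1 : ℝ) / (j : ℝ)
      < ∑ _j ∈ Finset.Icc (k + 1) s, (1 : ℝ) / ((k : ℝ) + 1) := by
    apply Finset.sum_lt_sum
    · intro i hi
      simp only [Finset.mem_Icc] at hi
      apply one_div_le_one_div_of_le (by positivity)
      exact_mod_cast Nat.succ_le_of_lt (by omega)
    · refine ⟨s, by simp [Finset.mem_Icc]; omega, ?_⟩
      apply one_div_lt_one_div_of_lt (by positivity)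
      exact_mod_cast (by omega : k + 1 < s)
  rw [Finset.sum_const, hcard] at key
  have : ((s - k : ℕ) : ℝ) = (s : ℝ) - k := by
    have := Nat.cast_sub (le_of_lt (by omega : k < s)) (R := ℝ); exact this
  calc _ < (s - k : ℕ) • ((1 : ℝ) / ((k : ℝ) + 1)) := key
    _ = ((s : ℝ) - k) / ((k : ℝ) + 1) := by
        rw [nsmul_eq_mul, this]; ring

private lemma step (s k : ℕ) (h : k + 2 ≤ s) :
    ((s : ℝ) - k) / ∑ j ∈ Finset.Icc (k + 1) s, (1 : ℝ) / (j : ℝ) <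
      ((s : ℝ) - (k + 1 : ℕ)) / ∑ j ∈ Finset.Icc ((k + 1) + 1) s, (1 : ℝ) / (j : ℝ) := by
  have h1 := Spos s k (by omega)
  have h2 := Spos s (k + 1) (by omega)
  have hsplit : ∑ j ∈ Finset.Icc (k + 1) s, (1 : ℝ) / (j : ℝ)
      = 1 / ((k : ℝ) + 1) + ∑ j ∈ Finset.Icc (k + 2) s, (1 : ℝ) / (j : ℝ) := by
    have hset : Finset.Icc (k + 1) s = insert (k + 1) (Finset.Icc (k + 2) s) := by
      ext x; simp [Finset.mem_Icc, Finset.mem_insert]; omega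
    rw [hset, Finset.sum_insert (by simp [Finset.mem_Icc])]
    push_cast; ring_nf
  have hlt := Slt s k h
  rw [div_lt_div_iff₀ h1 h2]
  push_cast
  set A := ∑ j ∈ Finset.Icc (k + 1) s, (1 : ℝ) / (j : ℝ)
  set B := ∑ j ∈ Finset.Icc (k + 2) s, (1 : ℝ) / (j : ℝ)
  have hA : A = 1 / ((k : ℝ) + 1) + B := hsplit
  have hk1 : (0 : ℝ) < (k : ℝ) + 1 := by positivity
  have hAk : A * ((k : ℝ) + 1) < (s : ℝ) - k := by
    rw [lt_div_iff₀ hk1] at hlt; linarith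
  have e : A * ((k : ℝ) + 1) = 1 + B * ((k : ℝ) + 1) := by
    rw [hA]; field_simp
  have hB : B * ((k : ℝ) + 1) < (s : ℝ) - k - 1 := by linarith
  have hgoal : ((s:ℝ)-k) * B * ((k:ℝ)+1) < ((s:ℝ)-(k+1)) * A * ((k:ℝ)+1) := by
    nlinarith [hB, e]
  exact lt_of_mul_lt_mul_right hgoal (le_of_lt hk1)

/-- For fixed aggregate cache `s ≥ 2`, the delayed-CSIT DoF
`(s − t_r)/(∑_{j=t_r+1}^{s} 1/j)` is strictly increasing in the receive-side share:
for integers `0 ≤ k < k' ≤ s − 1`,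
`(s − k)/(∑_{j=k+1}^{s} 1/j) < (s − k')/(∑_{j=k'+1}^{s} 1/j)`. -/
theorem stmt_6 (s k k' : ℕ) (hs : 2 ≤ s) (hkk' : k < k') (hk' : k' ≤ s - 1) :
    ((s : ℝ) - (k : ℝ)) / ∑ j ∈ Finset.Icc (k + 1) s, (1 : ℝ) / (j : ℝ) <
      ((s : ℝ) - (k' : ℝ)) / ∑ j ∈ Finset.Icc (k' + 1) s, (1 : ℝ) / (j : ℝ) := by
  induction k' with
  | zero => omega
  | succ n ih =>
    rcases Nat.lt_or_ge k n with h | h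
    · calc _ < ((s : ℝ) - n) / ∑ j ∈ Finset.Icc (n + 1) s, (1 : ℝ) / (j : ℝ) :=
          ih h (by omega)
        _ < _ := by
          have := step s n (by omega)
          push_cast at this ⊢
          convert this using 4 <;> omega
    · have hk : k = n := by omega
      subst hk
      have := step s k (by omega)
      push_cast at this ⊢
      convert this using 4 <;> omega
end

section
/- Under mixed CSIT with any positive training/feedback fraction, receive-side cache is strictly more valuable than transmit-side cache: for all integers t_t ≥ 1, t_r ≥ 0 and every real α ∈ (0,1], d_M(t_t, t_r+1, α) > d_M(t_t+1, t_r, α). (Both configurations have the same aggregate normalized cache t_t + t_r + 1.) -/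
/-- Mixed-CSIT degrees of freedom:
`d_M(t_t, t_r, α) = (t_t + t_r) + α·(d_D(t_t,t_r) − (t_t + t_r))`. -/
noncomputable def dM (tt tr : ℕ) (α : ℝ) : ℝ :=
  ((tt : ℝ) + (tr : ℝ)) + α * (dD tt tr - ((tt : ℝ) + (tr : ℝ)))

/-- Under mixed CSIT with any positive training fraction, receive-side cache is strictly
more valuable: for `t_t ≥ 1`, `t_r ≥ 0`, and `α ∈ (0,1]`,
`d_M(t_t, t_r+1, α) > d_M(t_t+1, t_r, α)`. -/
theorem stmt_9 (tt tr : ℕ) (htt : 1 ≤ tt) (α : ℝ) (hα0 : 0 < α) (hα1 : α ≤ 1) :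
    dM tt (tr + 1) α > dM (tt + 1) tr α := by
  have h1 : (0:ℝ) < (tr:ℝ) + 1 := by positivity
  set S : ℝ := ∑ j ∈ Finset.Icc (tr+2) (tr+1+tt), (1 : ℝ) / (j : ℝ) with hSdef
  have hne : (Finset.Icc (tr+2) (tr+1+tt)).Nonempty := by
    rw [Finset.nonempty_Icc]; omega
  have hSpos : 0 < S := by
    apply Finset.sum_pos _ hne
    intro j hj
    have hj1 : tr + 2 ≤ j := (Finset.mem_Icc.mp hj).1
    have : (0:ℝ) < j := by exact_mod_cast Nat.lt_of_lt_of_le (by omega) hj1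
    positivity
  have hScard : (Finset.Icc (tr+2) (tr+1+tt)).card = tt := by
    rw [Nat.card_Icc]; omega
  have hSlt : S < (tt:ℝ) / ((tr:ℝ)+1) := by
    have h2 : S < ∑ _j ∈ Finset.Icc (tr+2) (tr+1+tt), (1:ℝ)/((tr:ℝ)+1) := by
      apply Finset.sum_lt_sum_of_nonempty hne
      intro j hj
      have hj1 : tr + 2 ≤ j := (Finset.mem_Icc.mp hj).1
      have hjr : (tr:ℝ) + 1 < (j:ℝ) := by exact_mod_cast (by omega : tr + 1 < j)
      exact one_div_lt_one_div_of_lt h1 hjr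
    have h3 : ∑ _j ∈ Finset.Icc (tr+2) (tr+1+tt), (1:ℝ)/((tr:ℝ)+1)
        = (tt:ℝ) / ((tr:ℝ)+1) := by
      rw [Finset.sum_const, hScard, nsmul_eq_mul]
      ring
    linarith
  -- rewrite the two dD values
  have hdD1 : dD tt (tr+1) = (tt:ℝ) / S := by
    unfold dD
    rw [show tr+1+1 = tr+2 from rfl]
  have hT : ∑ j ∈ Finset.Icc (tr + 1) (tr + (tt+1)), (1 : ℝ) / (j : ℝ)
      = 1/((tr:ℝ)+1) + S := by
    have hins : Finset.Icc (tr + 1) (tr + (tt+1))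
        = insert (tr+1) (Finset.Icc (tr+2) (tr+1+tt)) := by
      ext x
      simp only [Finset.mem_Icc, Finset.mem_insert]
      omega
    rw [hins, Finset.sum_insert (by simp only [Finset.mem_Icc]; omega)]
    congr 1
    push_cast
    ring
  have hdD2 : dD (tt+1) tr = ((tt:ℝ)+1) / (1/((tr:ℝ)+1) + S) := by
    unfold dD
    rw [hT]
    push_cast
    ring_nf
  have hTpos : 0 < 1/((tr:ℝ)+1) + S := by positivity
  have hkey : dD (tt+1) tr < dD tt (tr+1) := by
    rw [hdD1, hdD2, div_lt_div_iff₀ hTpos hSpos]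
    have htt' : (1:ℝ) ≤ (tt:ℝ) := by exact_mod_cast htt
    have hmul : S * ((tr:ℝ)+1) < (tt:ℝ) := (lt_div_iff₀ h1).mp hSlt
    have hinv : ((tr:ℝ)+1) * (1/((tr:ℝ)+1)) = 1 := by field_simp
    nlinarith [hSpos, h1, hinv, hmul]
  unfold dM
  push_cast
  nlinarith [mul_pos hα0 (sub_pos.mpr hkey)]
end

section
/- Under mixed CSIT, increasing the transmit-side cache strictly increases the degrees of freedom: for all integers t_t ≥ 1, t_r ≥ 0 and every real α ∈ [0,1], d_M(t_t+1, t_r, α) > d_M(t_t, t_r, α). -/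
lemma harm_lb (tr tt : ℕ) (htt : 1 ≤ tt) :
    (tt : ℝ) / ((tr : ℝ) + tt + 1) < ∑ j ∈ Finset.Icc (tr + 1) (tr + tt), (1 : ℝ) / (j : ℝ) := by
  have hcard : (Finset.Icc (tr + 1) (tr + tt)).card = tt := by
    rw [Nat.card_Icc]; omega
  have hle : ∀ j ∈ Finset.Icc (tr + 1) (tr + tt),
      (1 : ℝ) / ((tr : ℝ) + tt) ≤ 1 / (j : ℝ) := by
    intro j hj
    rw [Finset.mem_Icc] at hj
    apply one_div_le_one_div_of_le
    · exact_mod_cast Nat.lt_of_lt_of_le (Nat.succ_le_succ (Nat.zero_le tr)) hj.1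
    · exact_mod_cast by push_cast; exact_mod_cast hj.2
  have hsum : (tt : ℝ) / ((tr : ℝ) + tt) ≤ ∑ j ∈ Finset.Icc (tr + 1) (tr + tt), (1 : ℝ) / (j : ℝ) := by
    have := Finset.sum_le_sum hle
    simp only [Finset.sum_const, hcard, nsmul_eq_mul] at this
    calc (tt : ℝ) / ((tr : ℝ) + tt) = (tt : ℝ) * (1 / ((tr : ℝ) + tt)) := by ring
    _ ≤ _ := this
  have hpos : (0 : ℝ) < (tr : ℝ) + tt := by
    have : (0:ℝ) ≤ (tr:ℝ) := Nat.cast_nonneg tr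
    have : (1:ℝ) ≤ (tt:ℝ) := by exact_mod_cast htt
    linarith
  have hstrict : (tt : ℝ) / ((tr : ℝ) + tt + 1) < (tt : ℝ) / ((tr : ℝ) + tt) := by
    apply div_lt_div_of_pos_left
    · exact_mod_cast htt
    · exact hpos
    · linarith
  linarith

lemma dD_strict (tt tr : ℕ) (htt : 1 ≤ tt) : dD tt tr < dD (tt + 1) tr := by
  set S : ℝ := ∑ j ∈ Finset.Icc (tr + 1) (tr + tt), (1 : ℝ) / (j : ℝ) with hS
  have hSpos : 0 < S := by
    apply Finset.sum_pos
    · intro j hj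
      rw [Finset.mem_Icc] at hj
      have : 0 < j := by omega
      positivity
    · rw [← Finset.card_pos, Nat.card_Icc]; omega
  have hsplit : ∑ j ∈ Finset.Icc (tr + 1) (tr + (tt + 1)), (1 : ℝ) / (j : ℝ)
      = S + 1 / ((tr : ℝ) + tt + 1) := by
    have h : tr + (tt + 1) = (tr + tt) + 1 := by omega
    rw [h, Finset.sum_Icc_succ_top (by omega : tr + 1 ≤ tr + tt + 1)]
    push_cast; ring
  have hc : (0 : ℝ) < 1 / ((tr : ℝ) + tt + 1) := by positivity
  have hlb := harm_lb tr tt htt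
  rw [dD, dD, hsplit, ← hS]
  rw [div_lt_div_iff₀ hSpos (by linarith)]
  have hkey : (tt : ℝ) * (1 / ((tr : ℝ) + tt + 1)) < S := by
    calc (tt : ℝ) * (1 / ((tr : ℝ) + tt + 1)) = (tt : ℝ) / ((tr : ℝ) + tt + 1) := by ring
    _ < S := hlb
  push_cast
  nlinarith [hkey]

/-- Under mixed CSIT, more transmit-side cache strictly increases the DoF:
`d_M(t_t+1, t_r, α) > d_M(t_t, t_r, α)` for `t_t ≥ 1`, `t_r ≥ 0`, `α ∈ [0,1]`. -/
theorem stmt_11 (tt tr : ℕ) (htt : 1 ≤ tt) (α : ℝ) (hα0 : 0 ≤ α) (hα1 : α ≤ 1) :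
    dM (tt + 1) tr α > dM tt tr α := by
  have hd := dD_strict tt tr htt
  unfold dM
  push_cast
  rcases lt_or_eq_of_le hα1 with h | h
  · nlinarith [mul_nonneg hα0 (sub_pos.2 hd).le]
  · subst h; nlinarith
end

section
/- Under mixed CSIT, increasing the receive-side cache strictly increases the degrees of freedom: for all integers t_t ≥ 1, t_r ≥ 0 and every real α ∈ [0,1], d_M(t_t, t_r+1, α) > d_M(t_t, t_r, α). -/
lemma dD_mono (tt tr : ℕ) (htt : 1 ≤ tt) : dD tt tr < dD tt (tr + 1) := by
  set S : ℕ → ℝ := fun t => ∑ j ∈ Finset.Icc (t + 1) (t + tt), (1 : ℝ) / (j : ℝ) with hS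
  have hne : ∀ t : ℕ, (Finset.Icc (t + 1) (t + tt)).Nonempty := fun t =>
    Finset.nonempty_Icc.2 (by omega)
  have hpos : ∀ t : ℕ, 0 < S t := by
    intro t
    refine Finset.sum_pos (fun j hj => ?_) (hne t)
    have : (0:ℕ) < j := by have := (Finset.mem_Icc.1 hj).1; omega
    positivity
  have hlt : S (tr + 1) < S tr := by
    have hmap : Finset.Icc (tr + 1 + 1) (tr + 1 + tt)
        = (Finset.Icc (tr + 1) (tr + tt)).map (addLeftEmbedding 1) := by
      rw [Finset.map_add_left_Icc]
      congr 1 <;> omega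
    have : S (tr + 1) = ∑ j ∈ Finset.Icc (tr + 1) (tr + tt), (1 : ℝ) / ((1 + j : ℕ) : ℝ) := by
      simp only [hS]; rw [hmap, Finset.sum_map]
      rfl
    rw [this]
    refine Finset.sum_lt_sum_of_nonempty (hne tr) (fun j hj => ?_)
    have hj1 : (1:ℕ) ≤ j := by have := (Finset.mem_Icc.1 hj).1; omega
    have h0 : (0:ℝ) < (j:ℝ) := by exact_mod_cast hj1
    apply one_div_lt_one_div_of_lt h0
    push_cast; linarith
  have : dD tt tr < dD tt (tr + 1) := by
    unfold dD
    have httR : (0:ℝ) < (tt:ℝ) := by exact_mod_cast htt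
    exact div_lt_div_of_pos_left httR (hpos (tr + 1)) hlt
  exact this

/-- Under mixed CSIT, more receive-side cache strictly increases the DoF:
`d_M(t_t, t_r+1, α) > d_M(t_t, t_r, α)` for `t_t ≥ 1`, `t_r ≥ 0`, `α ∈ [0,1]`. -/
theorem stmt_12 (tt tr : ℕ) (htt : 1 ≤ tt) (α : ℝ) (hα0 : 0 ≤ α) (hα1 : α ≤ 1) :
    dM tt (tr + 1) α > dM tt tr α := by
  have hΔ := dD_mono tt tr htt
  unfold dM
  push_cast
  nlinarith [mul_nonneg hα0 (sub_pos.2 hΔ).le]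
end

section
/- With equal cache sizes at both sides (t_t = t_r = t), the DoF loss of delayed CSIT relative to full CSIT is strictly increasing in the aggregate cache size: for every integer t ≥ 1, one has 2(t+1) − d_D(t+1, t+1) > 2t − d_D(t, t). (Equivalently, the magnitude of the slope of the mixed-CSIT DoF as a function of α grows with the total cache size when β = t_r/t_t = 1.) -/
/-- With `t_t = t_r = t`, the DoF loss of delayed CSIT relative to full CSIT is strictly
increasing in the aggregate cache size: for every `t ≥ 1`,
`2(t+1) − d_D(t+1, t+1) > 2t − d_D(t, t)`. -/
theorem stmt_13 (t : ℕ) (ht : 1 ≤ t) :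
    2 * ((t : ℝ) + 1) - dD (t + 1) (t + 1) > 2 * (t : ℝ) - dD t t := by
  have ht2 : t + 1 + (t + 1) = 2 * t + 2 := by omega
  have ht1 : t + t = 2 * t := by omega
  set S : ℝ := ∑ j ∈ Finset.Icc (t + 1) (t + t), (1 : ℝ) / (j : ℝ) with hSdef
  set S' : ℝ := ∑ j ∈ Finset.Icc (t + 1 + 1) (t + 1 + (t + 1)), (1 : ℝ) / (j : ℝ) with hS'def
  have htR : (1 : ℝ) ≤ (t : ℝ) := by exact_mod_cast ht
  -- S > 0
  have hSpos : 0 < S := by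
    apply Finset.sum_pos
    · intro i hi
      simp only [Finset.mem_Icc] at hi
      have hi0 : 0 < i := by omega
      have : (0 : ℝ) < (i : ℝ) := by exact_mod_cast hi0
      positivity
    · exact ⟨t + 1, by simp [Finset.mem_Icc]; omega⟩
  -- S' > 1/2
  have hS'half : (1 : ℝ) / 2 < S' := by
    have hcard : (Finset.Icc (t + 1 + 1) (t + 1 + (t + 1))).card = t + 1 := by
      rw [Nat.card_Icc]; omega
    have hconst : ∑ _j ∈ Finset.Icc (t + 1 + 1) (t + 1 + (t + 1)),
        (1 : ℝ) / (2 * (t : ℝ) + 2) = ((t : ℝ) + 1) / (2 * (t : ℝ) + 2) := by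
      rw [Finset.sum_const, hcard]
      push_cast
      ring
    have hlt : ∑ _j ∈ Finset.Icc (t + 1 + 1) (t + 1 + (t + 1)),
        (1 : ℝ) / (2 * (t : ℝ) + 2) < S' := by
      apply Finset.sum_lt_sum
      · intro i hi
        simp only [Finset.mem_Icc] at hi
        have hi2 : (i : ℝ) ≤ 2 * (t : ℝ) + 2 := by exact_mod_cast (by omega : i ≤ 2 * t + 2)
        have hi0 : (0 : ℝ) < (i : ℝ) := by exact_mod_cast (by omega : 0 < i)
        exact one_div_le_one_div_of_le hi0 hi2
      · refine ⟨t + 2, by simp [Finset.mem_Icc]; omega, ?_⟩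
        have h1 : ((t : ℝ) + 2) < 2 * (t : ℝ) + 2 := by linarith
        have h0 : (0 : ℝ) < (t : ℝ) + 2 := by linarith
        have : ((t + 2 : ℕ) : ℝ) = (t : ℝ) + 2 := by push_cast; ring
        rw [this]
        exact one_div_lt_one_div_of_lt h0 h1
    have : ((t : ℝ) + 1) / (2 * (t : ℝ) + 2) = 1 / 2 := by
      rw [div_eq_div_iff (by linarith) (by norm_num)]; ring
    linarith [hconst ▸ hlt, this]
  have hS'pos : 0 < S' := by linarith
  -- S ≤ S'
  have hSS' : S ≤ S' := by
    have key : S' + 1 / ((t : ℝ) + 1) = S + 1 / (2 * (t : ℝ) + 1) + 1 / (2 * (t : ℝ) + 2) := by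
      have e1 : Finset.Icc (t + 1) (t + 1 + (t + 1)) =
          Finset.cons (t + 1) (Finset.Icc (t + 1 + 1) (t + 1 + (t + 1)))
            (by simp [Finset.mem_Icc]) := by
        rw [Finset.Icc_eq_cons_Ioc (by omega)]
        congr 1
        rw [← Finset.Icc_add_one_left_eq_Ioc]
      have lhs : ∑ j ∈ Finset.Icc (t + 1) (t + 1 + (t + 1)), (1 : ℝ) / (j : ℝ)
          = 1 / ((t : ℝ) + 1) + S' := by
        rw [e1, Finset.sum_cons]
        push_cast
        ring
      have rhs : ∑ j ∈ Finset.Icc (t + 1) (t + 1 + (t + 1)), (1 : ℝ) / (j : ℝ)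
          = S + 1 / (2 * (t : ℝ) + 1) + 1 / (2 * (t : ℝ) + 2) := by
        have e2 : t + 1 + (t + 1) = (2 * t + 1) + 1 := by omega
        have e3 : 2 * t + 1 = (2 * t) + 1 := rfl
        rw [e2, Finset.sum_Icc_succ_top (by omega), Finset.sum_Icc_succ_top (by omega)]
        rw [hSdef, ht1]
        push_cast
        ring
      linarith [lhs ▸ rhs]
    have h2 : (1 : ℝ) / ((t : ℝ) + 1) = 1 / (2 * (t : ℝ) + 2) + 1 / (2 * (t : ℝ) + 2) := by
      rw [div_add_div _ _ (by linarith) (by linarith)]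
      rw [div_eq_div_iff (by linarith) (by nlinarith)]
      ring
    have h3 : (1 : ℝ) / (2 * (t : ℝ) + 2) ≤ 1 / (2 * (t : ℝ) + 1) :=
      one_div_le_one_div_of_le (by linarith) (by linarith)
    linarith
  -- conclusion
  have key : ((t : ℝ) + 1) / S' - (t : ℝ) / S < 2 := by
    have h1 : (t : ℝ) / S' ≤ (t : ℝ) / S :=
      div_le_div_of_nonneg_left (by linarith) hSpos hSS'
    have h2 : ((t : ℝ) + 1) / S' - (t : ℝ) / S' = 1 / S' := by
      field_simp
      ring
    have h3 : 1 / S' < 2 := by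
      rw [div_lt_iff₀ hS'pos]
      linarith
    linarith
  have hd1 : dD (t + 1) (t + 1) = ((t : ℝ) + 1) / S' := by
    rw [dD, ← hS'def]; push_cast; ring
  have hd0 : dD t t = (t : ℝ) / S := by
    rw [dD, hSdef]
  rw [hd1, hd0]
  linarith
end
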